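/- If a block upper-triangular matrix (over the complex numbers) is diagonalizable, then each of its diagonal blocks is diagonalizable. -/

import Mathlib

open Polynomial Matrix

/-- A complex square matrix is diagonalizable if it is similar to a diagonal matrix. -/
def IsDiagonalizable {n : Type*} [Fintype n] [DecidableEq n] (M : Matrix n n ℂ) : Prop :=
  ∃ P : Matrix n n ℂ, IsUnit P.det ∧ ∃ d : n → ℂ, P⁻¹ * M * P = Matrix.diagonal d

section aux

variable {m n : Type*} [Fintype m] [DecidableEq m] [Fintype n] [DecidableEq n]

lemma aux_pow_fromBlocks (A : Matrix m m ℂ) (B : Matrix m n ℂ) (C : Matrix n n ℂ) (k : ℕ) :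
    ∃ X, (Matrix.fromBlocks A B 0 C) ^ k = Matrix.fromBlocks (A ^ k) X 0 (C ^ k) := by
  induction k with
  | zero => exact ⟨0, by simp [Matrix.fromBlocks_one]⟩
  | succ k ih =>
    obtain ⟨X, hX⟩ := ih
    refine ⟨A ^ k * B + X * C, ?_⟩
    rw [pow_succ, hX, Matrix.fromBlocks_multiply]
    simp [pow_succ]

lemma aux_aeval_fromBlocks (A : Matrix m m ℂ) (B : Matrix m n ℂ) (C : Matrix n n ℂ) (p : ℂ[X]) :
    ∃ X, Polynomial.aeval (Matrix.fromBlocks A B 0 C) p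
      = Matrix.fromBlocks (Polynomial.aeval A p) X 0 (Polynomial.aeval C p) := by
  induction p using Polynomial.induction_on' with
  | add p q hp hq =>
    obtain ⟨X, hX⟩ := hp; obtain ⟨Y, hY⟩ := hq
    exact ⟨X + Y, by simp [hX, hY, Matrix.fromBlocks_add]⟩
  | monomial k c =>
    obtain ⟨X, hX⟩ := aux_pow_fromBlocks A B C k
    refine ⟨c • X, ?_⟩
    simp only [Polynomial.aeval_monomial, hX, Algebra.algebraMap_eq_smul_one, smul_mul_assoc,
      one_mul, Matrix.fromBlocks_smul, smul_zero]

lemma aux_aeval_conj (P N : Matrix n n ℂ) (hP : IsUnit P.det) (p : ℂ[X]) :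
    Polynomial.aeval (P * N * P⁻¹) p = P * Polynomial.aeval N p * P⁻¹ := by
  have h1 : P⁻¹ * P = 1 := Matrix.nonsing_inv_mul P hP
  have hpow : ∀ k : ℕ, (P * N * P⁻¹) ^ k = P * N ^ k * P⁻¹ := by
    intro k
    induction k with
    | zero => simp [Matrix.mul_nonsing_inv P hP]
    | succ k ih =>
      rw [pow_succ, ih, pow_succ]
      rw [show P * N ^ k * P⁻¹ * (P * N * P⁻¹) = P * N ^ k * (P⁻¹ * P) * N * P⁻¹ by
        noncomm_ring]
      rw [h1, mul_one]
      noncomm_ring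
  induction p using Polynomial.induction_on' with
  | add p q hp hq => simp [hp, hq, Matrix.mul_add, Matrix.add_mul]
  | monomial k c =>
    simp only [Polynomial.aeval_monomial, hpow]
    rw [Algebra.algebraMap_eq_smul_one, smul_mul_assoc, one_mul, smul_mul_assoc, one_mul,
      Matrix.mul_smul, smul_mul_assoc]

lemma aux_aeval_diagonal (d : n → ℂ) (p : ℂ[X]) :
    Polynomial.aeval (Matrix.diagonal d) p = Matrix.diagonal (fun i => p.eval (d i)) := by
  have h := Polynomial.aeval_algHom_apply (Matrix.diagonalAlgHom (n := n) (α := ℂ) ℂ) d p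
  simp only [Matrix.diagonalAlgHom_apply] at h
  rw [h]
  have h3 : (Polynomial.aeval d) p = fun i => p.eval (d i) := by
    funext i
    have h2 := Polynomial.aeval_algHom_apply (Pi.evalAlgHom ℂ (fun _ : n => ℂ) i) d p
    simp only [Pi.evalAlgHom_apply] at h2
    rw [← h2]
    simp [Polynomial.coe_aeval_eq_eval]
  rw [h3]

/-- A matrix annihilated by a squarefree polynomial (over ℂ) is diagonalizable. -/
lemma aux_isDiagonalizable_of_squarefree (M : Matrix n n ℂ) (p : ℂ[X]) (hp : Squarefree p)
    (h0 : Polynomial.aeval M p = 0) : IsDiagonalizable M := by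
  set f : Module.End ℂ (n → ℂ) := Matrix.toLinAlgEquiv' M with hf_def
  have hf : Polynomial.aeval f p = 0 := by
    rw [hf_def, Polynomial.aeval_algEquiv]
    simp [h0]
  have hss : f.IsSemisimple := Module.End.isSemisimple_of_squarefree_aeval_eq_zero hp hf
  have hfs := hss.isFinitelySemisimple
  have hT : ⨆ μ : ℂ, f.eigenspace μ = ⊤ := by
    have h := Module.End.iSup_maxGenEigenspace_eq_top f
    simpa only [hfs.maxGenEigenspace_eq_eigenspace] using h
  have hind := f.eigenspaces_iSupIndep
  have hint : DirectSum.IsInternal f.eigenspace :=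
    DirectSum.isInternal_submodule_of_iSupIndep_of_iSup_eq_top hind hT
  let v : ∀ μ : ℂ, Module.Basis (Module.Basis.ofVectorSpaceIndex ℂ (f.eigenspace μ)) ℂ (f.eigenspace μ) :=
    fun μ => Module.Basis.ofVectorSpace ℂ _
  let b := hint.collectedBasis v
  haveI : Fintype (Σ μ : ℂ, Module.Basis.ofVectorSpaceIndex ℂ (f.eigenspace μ)) :=
    FiniteDimensional.fintypeBasisIndex b
  have hcard : Fintype.card n = Fintype.card (Σ μ : ℂ, Module.Basis.ofVectorSpaceIndex ℂ (f.eigenspace μ)) := by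
    rw [← Module.finrank_eq_card_basis b, Module.finrank_pi]
  let e := Fintype.equivOfCardEq hcard
  let b' : Module.Basis n ℂ (n → ℂ) := b.reindex e.symm
  have heig : ∀ j : n, f (b' j) = (e j).1 • b' j := by
    intro j
    have hmem : b (e j) ∈ f.eigenspace (e j).1 := by
      rw [hint.collectedBasis_coe v]
      exact ((v (e j).1) (e j).2).2
    have := Module.End.mem_eigenspace_iff.mp hmem
    simpa [b', Module.Basis.reindex_apply] using this
  set d : n → ℂ := fun j => (e j).1 with hd
  set P : Matrix n n ℂ := (Pi.basisFun ℂ n).toMatrix b' with hP_def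
  have hPdet : IsUnit P.det := by
    have h1 : P * b'.toMatrix (Pi.basisFun ℂ n) = 1 := Module.Basis.toMatrix_mul_toMatrix_flip _ _
    have := congrArg Matrix.det h1
    rw [Matrix.det_mul, Matrix.det_one] at this
    exact IsUnit.of_mul_eq_one _ this
  have hPij : ∀ i j, P i j = b' j i := by
    intro i j
    simp [hP_def, Module.Basis.toMatrix_apply]
  have hMP : M * P = P * Matrix.diagonal d := by
    ext i j
    rw [Matrix.mul_apply, Matrix.mul_diagonal]
    have h1 : ∑ k, M i k * P k j = (f (b' j)) i := by
      rw [hf_def, Matrix.toLinAlgEquiv'_apply, Matrix.mulVec, dotProduct]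
      simp [hPij]
    rw [h1, heig j, hPij]
    simp [hd, mul_comm]
  refine ⟨P, hPdet, d, ?_⟩
  rw [mul_assoc, hMP, ← mul_assoc, Matrix.nonsing_inv_mul P hPdet, one_mul]

end aux

/-- If a block upper-triangular complex matrix is diagonalizable,
then each of its diagonal blocks is diagonalizable. -/
theorem diag_blocks_diagonalizable_of_blockTriangular_diagonalizable
    {m n : Type*} [Fintype m] [DecidableEq m] [Fintype n] [DecidableEq n]
    (A : Matrix m m ℂ) (B : Matrix m n ℂ) (C : Matrix n n ℂ)
    (h : IsDiagonalizable (Matrix.fromBlocks A B 0 C)) :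
    IsDiagonalizable A ∧ IsDiagonalizable C := by
  obtain ⟨P, hP, d, hPD⟩ := h
  set M := Matrix.fromBlocks A B 0 C with hM
  set s : Finset ℂ := Finset.image d Finset.univ with hs
  set p : ℂ[X] := ∏ c ∈ s, (X - Polynomial.C c) with hp_def
  have hp : Squarefree p := by
    refine (Polynomial.separable_prod_X_sub_C_iff' (f := id) (s := s)).mpr ?_ |>.squarefree
    intro x _ y _ hxy
    exact hxy
  have hM_eq : M = P * Matrix.diagonal d * P⁻¹ := by
    have := congrArg (fun N => P * N * P⁻¹) hPD
    rw [← this, ← mul_assoc, ← mul_assoc, Matrix.mul_nonsing_inv P hP, one_mul, mul_assoc,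
      Matrix.mul_nonsing_inv P hP, mul_one]
  have haevalM : Polynomial.aeval M p = 0 := by
    rw [hM_eq, aux_aeval_conj P _ hP, aux_aeval_diagonal]
    have : (fun i => p.eval (d i)) = fun _ => 0 := by
      funext i
      rw [hp_def]
      simp only [Polynomial.eval_prod, Polynomial.eval_sub, Polynomial.eval_X, Polynomial.eval_C]
      exact Finset.prod_eq_zero (Finset.mem_image_of_mem d (Finset.mem_univ i)) (by ring)
    rw [this]
    simp
  obtain ⟨Y, hY⟩ := aux_aeval_fromBlocks A B C p
  rw [← hM, haevalM] at hY
  have hA : Polynomial.aeval A p = 0 := by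
    have := congrArg Matrix.toBlocks₁₁ hY
    ext i j
    simpa [Matrix.toBlocks_fromBlocks₁₁, Matrix.toBlocks₁₁] using congrFun (congrFun this.symm i) j
  have hC : Polynomial.aeval C p = 0 := by
    have := congrArg Matrix.toBlocks₂₂ hY
    ext i j
    simpa [Matrix.toBlocks_fromBlocks₂₂, Matrix.toBlocks₂₂] using congrFun (congrFun this.symm i) j
  exact ⟨aux_isDiagonalizable_of_squarefree A p hp hA,
    aux_isDiagonalizable_of_squarefree C p hp hC⟩
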